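/- Weakly ramified embedding dimension: let p be prime, n ≥ 1, 2 ≤ h ≤ p^n, m = h−1, k = max(m, p^n−m), w(s) = [s ≥ k]. Define 𝔈 = { u ∈ {0,...,p^n−1} : w(u) > w(u−s) + w(s) for all s with 0 ≺ s ≺ u }. Then |𝔈| = n + 2 + α(k) − γ(k), where α(k) is the number of j with v_p(k) < j ≤ n−1 and k_{(j)} ≠ p−1, and γ(k) = 1 if p = 2 and k = 2^{n−1}, else γ(k) = 0. -/

import Mathlib

/-- The `i`-th base-`p` digit of `s`. -/
def dig (p s i : ℕ) : ℕ := s / p ^ i % p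

/-- Digitwise partial order on base-`p` expansions: `s ⪯ t`. -/
def preceq (p s t : ℕ) : Prop := ∀ i, dig p s i ≤ dig p t i

/-- `α(k)`: the number of indices `j` with `v_p(k) < j ≤ n−1` whose base-`p` digit of `k`
is not `p−1`. -/
def alphaCount (p n k : ℕ) : ℕ :=
  ((Finset.Ioc (padicValNat p k) (n - 1)).filter (fun j => dig p k j ≠ p - 1)).card

/-- `γ(k) = 1` if `p = 2` and `k = 2^{n−1}`, else `0`. -/
def gammaCount (p n k : ℕ) : ℕ :=
  if p = 2 ∧ k = 2 ^ (n - 1) then 1 else 0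

variable {p : ℕ}

lemma dig_zero (s : ℕ) : dig p s 0 = s % p := by simp [dig]

lemma dig_succ (s i : ℕ) : dig p s (i+1) = dig p (s/p) i := by
  simp [dig, pow_succ, Nat.div_div_eq_div_mul, mul_comm]

lemma preceq_shift {s u : ℕ} (h : preceq p s u) : preceq p (s/p) (u/p) := by
  intro i
  have := h (i+1)
  rwa [dig_succ, dig_succ] at this

lemma preceq_le (hp : 2 ≤ p) : ∀ s u, preceq p s u → s ≤ u := by
  intro s
  induction s using Nat.strong_induction_on with
  | _ s ih =>
    intro u h
    rcases Nat.eq_zero_or_pos s with rfl | hs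
    · exact Nat.zero_le u
    · have hlt : s / p < s := Nat.div_lt_self hs (by omega)
      have h1 : s / p ≤ u / p := ih _ hlt _ (preceq_shift h)
      have h2 : s % p ≤ u % p := by have := h 0; rwa [dig_zero, dig_zero] at this
      have hu := Nat.div_add_mod u p
      have hs' := Nat.div_add_mod s p
      have : p * (s/p) ≤ p * (u/p) := Nat.mul_le_mul_left p h1
      omega

lemma dig_eq_of_all (hp : 2 ≤ p) {s u : ℕ} (h : ∀ i, dig p s i = dig p u i) : s = u :=
  le_antisymm (preceq_le hp s u (fun i => (h i).le))
    (preceq_le hp u s (fun i => (h i).ge))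

lemma exists_dig_lt (hp : 2 ≤ p) {s u : ℕ} (h : preceq p s u) (hne : s ≠ u) :
    ∃ j, dig p s j < dig p u j := by
  by_contra hc
  push_neg at hc
  exact hne (dig_eq_of_all hp (fun i => le_antisymm (h i) (hc i)))

lemma sub_digits (hp : 2 ≤ p) : ∀ u s, preceq p s u →
    ∀ i, dig p (u - s) i = dig p u i - dig p s i := by
  intro u
  induction u using Nat.strong_induction_on with
  | _ u ih =>
    intro s h i
    rcases Nat.eq_zero_or_pos u with rfl | hu
    · have : s = 0 := Nat.le_zero.mp (preceq_le hp s 0 h)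
      subst this; simp [dig]
    · have h1 : s / p ≤ u / p := preceq_le hp _ _ (preceq_shift h)
      have h2 : s % p ≤ u % p := by have := h 0; rwa [dig_zero, dig_zero] at this
      have hu' := Nat.div_add_mod u p
      have hs' := Nat.div_add_mod s p
      have hmul : p * (s/p) ≤ p * (u/p) := Nat.mul_le_mul_left p h1
      have hmulsub : p * (u/p - s/p) = p * (u/p) - p * (s/p) := Nat.mul_sub p _ _
      have key : u - s = p * (u/p - s/p) + (u % p - s % p) := by omega
      cases i with
      | zero =>
        rw [dig_zero, dig_zero, dig_zero, key, Nat.mul_add_mod]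
        exact Nat.mod_eq_of_lt (lt_of_le_of_lt (Nat.sub_le _ _) (Nat.mod_lt u (by omega)))
      | succ i =>
        rw [dig_succ, dig_succ, dig_succ]
        have hdiv : (u - s) / p = u / p - s / p := by
          rw [key, Nat.mul_add_div (by omega : 0 < p)]
          have : (u % p - s % p) / p = 0 :=
            Nat.div_eq_of_lt (lt_of_le_of_lt (Nat.sub_le _ _) (Nat.mod_lt u (by omega)))
          omega
        rw [hdiv]
        exact ih (u/p) (Nat.div_lt_self hu (by omega)) (s/p) (preceq_shift h) i

lemma dig_pow (hp : 2 ≤ p) (i j : ℕ) : dig p (p^i) j = if j = i then 1 else 0 := by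
  unfold dig
  rcases lt_trichotomy j i with hlt | rfl | hgt
  · rw [if_neg (by omega), Nat.pow_div hlt.le (by omega)]
    have he : p ^ (i - j) = p * p ^ (i - j - 1) := by
      rw [← pow_succ']
      congr 1
      omega
    rw [he, Nat.mul_mod_right]
  · rw [if_pos rfl, Nat.div_self (Nat.pow_pos (n := j) (by omega)), Nat.mod_eq_of_lt (by omega)]
  · rw [if_neg (by omega)]
    have : p ^ i < p ^ j := Nat.pow_lt_pow_right (by omega) hgt
    rw [Nat.div_eq_of_lt this, Nat.zero_mod]

lemma dig_pos_le {u j : ℕ} (h : dig p u j ≠ 0) : p ^ j ≤ u := by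
  unfold dig at h
  by_contra hc
  push_neg at hc
  rw [Nat.div_eq_of_lt hc] at h
  simp at h

lemma preceq_pow_iff (hp : 2 ≤ p) {s : ℕ} (i : ℕ) (h : preceq p s (p^i)) :
    s = 0 ∨ s = p^i := by
  induction i generalizing s with
  | zero =>
    have := preceq_le hp s (p^0) h
    simp only [pow_zero] at this ⊢
    omega
  | succ i ih =>
    have h0 : s % p = 0 := by
      have := h 0
      rw [dig_zero, dig_zero, pow_succ, Nat.mul_mod_left] at this
      omega
    have hdivpow : p ^ (i+1) / p = p ^ i := by
      rw [pow_succ, Nat.mul_div_cancel _ (by omega : 0 < p)]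
    have hsh : preceq p (s/p) (p^i) := by
      have := preceq_shift h
      rwa [hdivpow] at this
    rcases ih hsh with h1 | h1
    · left
      have h2 := Nat.div_add_mod s p
      rw [h1, h0, Nat.mul_zero] at h2
      omega
    · right
      have hd : p ∣ s := Nat.dvd_of_mod_eq_zero h0
      rw [← Nat.mul_div_cancel' hd, h1, pow_succ]
      ring

lemma padic_mul_pow (hp : p.Prime) {c : ℕ} (j : ℕ) (hc : ¬ p ∣ c) (hc0 : c ≠ 0) :
    padicValNat p (p ^ j * c) = j := by
  haveI := Fact.mk hp
  rw [padicValNat.mul (pow_ne_zero j hp.pos.ne') hc0, padicValNat.prime_pow,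
    padicValNat.eq_zero_of_not_dvd hc, add_zero]

lemma dig_padic_ne (hp : p.Prime) {u : ℕ} (hu : u ≠ 0) :
    dig p u (padicValNat p u) ≠ 0 := by
  haveI := Fact.mk hp
  set v := padicValNat p u with hv
  obtain ⟨c, hc⟩ := pow_padicValNat_dvd (p := p) (n := u)
  have hpc : ¬ p ∣ c := by
    intro ⟨d, hd⟩
    apply pow_succ_padicValNat_not_dvd (p := p) hu
    refine ⟨d, ?_⟩
    conv_lhs => rw [hc, hd]
    rw [pow_succ]
    ring
  unfold dig
  rw [hc, Nat.mul_div_cancel_left _ (Nat.pow_pos (n := v) hp.pos)]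
  intro hmod
  exact hpc (Nat.dvd_of_mod_eq_zero hmod)

lemma dig_lt_padic (hp : p.Prime) {u i : ℕ} (hi : i < padicValNat p u) :
    dig p u i = 0 := by
  have hdvd : p ^ (i+1) ∣ u := dvd_trans (pow_dvd_pow p hi) pow_padicValNat_dvd
  obtain ⟨c, hc⟩ := hdvd
  unfold dig
  rw [hc, pow_succ, mul_assoc, Nat.mul_div_cancel_left _ (Nat.pow_pos (n := i) hp.pos),
    Nat.mul_mod_right]

lemma pow_padic_preceq (hp : p.Prime) {u : ℕ} (hu : u ≠ 0) :
    preceq p (p ^ padicValNat p u) u := by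
  intro i
  rw [dig_pow hp.two_le]
  split
  · next h => subst h; have := dig_padic_ne hp hu; omega
  · omega

lemma proper_minor (hp : p.Prime) {t u : ℕ} (hu : u ≠ 0) (h : preceq p t u) (hne : t ≠ u) :
    t + p ^ padicValNat p u ≤ u := by
  obtain ⟨j, hj⟩ := exists_dig_lt hp.two_le h hne
  have hjv : padicValNat p u ≤ j := by
    by_contra hc
    push_neg at hc
    rw [dig_lt_padic hp hc] at hj
    omega
  have hsub : dig p (u - t) j ≠ 0 := by
    rw [sub_digits hp.two_le u t h j]
    omega
  have h1 : p ^ j ≤ u - t := dig_pos_le hsub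
  have h2 : p ^ padicValNat p u ≤ p ^ j := Nat.pow_le_pow_right hp.pos hjv
  have h3 : t ≤ u := preceq_le hp.two_le t u h
  omega

lemma wpos (k s : ℕ) : (0:ℤ) ≤ if k ≤ s then (1:ℤ) else 0 := by split <;> norm_num

lemma charP (hp : p.Prime) (n k : ℕ) (hk1 : 1 ≤ k) (w : ℕ → ℤ)
    (hw : ∀ s, w s = if k ≤ s then 1 else 0) {u : ℕ} (hu : u < p ^ n) :
    (∀ s, s < p ^ n → s ≠ 0 → preceq p s u → s ≠ u → w u > w (u - s) + w s)
    ↔ (u = 0 ∨ (u < k ∧ ∃ i, u = p ^ i) ∨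
        (k ≤ u ∧ u - p ^ padicValNat p u < k)) := by
  constructor
  · intro hP
    by_cases hku : k ≤ u
    · right; right
      refine ⟨hku, ?_⟩
      by_cases hupow : p ^ padicValNat p u = u
      · rw [hupow, Nat.sub_self]; omega
      · have hu0 : u ≠ 0 := by omega
        have hple : p ^ padicValNat p u ≤ u :=
          preceq_le hp.two_le _ _ (pow_padic_preceq hp hu0)
        have h1 := hP (p ^ padicValNat p u) (lt_of_le_of_lt hple hu)
          (pow_ne_zero _ hp.pos.ne') (pow_padic_preceq hp hu0) hupow
        by_contra hc
        push_neg at hc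
        rw [hw, hw, hw, if_pos hku, if_pos hc] at h1
        have := wpos k (p ^ padicValNat p u)
        split_ifs at h1 <;> omega
    · push_neg at hku
      rcases Nat.eq_zero_or_pos u with rfl | hu0
      · left; rfl
      · right; left
        refine ⟨hku, ?_⟩
        by_contra hpow
        push_neg at hpow
        have hu0' : u ≠ 0 := by omega
        have hple : p ^ padicValNat p u ≤ u :=
          preceq_le hp.two_le _ _ (pow_padic_preceq hp hu0')
        have h1 := hP (p ^ padicValNat p u) (lt_of_le_of_lt hple hu)
          (pow_ne_zero _ hp.pos.ne') (pow_padic_preceq hp hu0')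
          (fun he => hpow _ he.symm)
        rw [hw, hw, hw, if_neg (by omega)] at h1
        have h2 := wpos k (u - p ^ padicValNat p u)
        have h3 := wpos k (p ^ padicValNat p u)
        omega
  · intro hchar s hs hs0 hpre hsu
    rcases hchar with rfl | ⟨hk, i, rfl⟩ | ⟨hku, hsmall⟩
    · exact absurd (Nat.le_zero.mp (preceq_le hp.two_le s 0 hpre)) hs0
    · rcases preceq_pow_iff hp.two_le i hpre with rfl | rfl
      · exact absurd rfl hs0
      · exact absurd rfl hsu
    · have hu0 : u ≠ 0 := by omega
      have hsle : s + p ^ padicValNat p u ≤ u := proper_minor hp hu0 hpre hsu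
      have hts : u - s ≠ u := by
        have := preceq_le hp.two_le s u hpre
        omega
      have htpre : preceq p (u - s) u := by
        intro i
        rw [sub_digits hp.two_le u s hpre i]
        omega
      have htle : (u - s) + p ^ padicValNat p u ≤ u := proper_minor hp hu0 htpre hts
      rw [hw, hw, hw, if_pos hku, if_neg (by omega), if_neg (by omega)]
      norm_num

lemma ceil_div_dvd {d k : ℕ} (hd : 0 < d) (h : d ∣ k) : d * ((k + d - 1) / d) = k := by
  obtain ⟨c, rfl⟩ := h
  have h1 : d * c + d - 1 = d * c + (d - 1) := by omega
  rw [h1, Nat.mul_add_div hd, Nat.div_eq_of_lt (by omega), Nat.add_zero]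

lemma ceil_div_not_dvd {d k : ℕ} (hd : 0 < d) (h : ¬ d ∣ k) :
    (k + d - 1) / d = k / d + 1 := by
  have hmod := Nat.div_add_mod k d
  have hr : k % d ≠ 0 := fun hc => h (Nat.dvd_of_mod_eq_zero hc)
  have hrd : k % d < d := Nat.mod_lt k hd
  have h1 : k + d - 1 = d * (k / d) + (k % d + d - 1) := by omega
  rw [h1, Nat.mul_add_div hd]
  have h2 : (k % d + d - 1) / d = 1 :=
    Nat.div_eq_of_lt_le (by omega) (by omega)
  omega

lemma fj_spec (hp : p.Prime) {n k j : ℕ} (hk1 : 1 ≤ k) (hkn : k < p ^ n)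
    (hj : j = padicValNat p k ∨
      (padicValNat p k < j ∧ j ≤ n - 1 ∧ dig p k j ≠ p - 1)) :
    k ≤ p ^ j * ((k + p ^ j - 1) / p ^ j) ∧
    p ^ j * ((k + p ^ j - 1) / p ^ j) < p ^ n ∧
    p ^ j * ((k + p ^ j - 1) / p ^ j) < k + p ^ j ∧
    padicValNat p (p ^ j * ((k + p ^ j - 1) / p ^ j)) = j := by
  haveI := Fact.mk hp
  have hp2 : 2 ≤ p := hp.two_le
  have hd : 0 < p ^ j := Nat.pow_pos (n := j) hp.pos
  rcases hj with rfl | ⟨hvj, hjn, hdig⟩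
  · rw [ceil_div_dvd hd pow_padicValNat_dvd]
    exact ⟨le_refl k, hkn, by omega, rfl⟩
  · have hn1 : 1 ≤ n := by
      rcases Nat.eq_zero_or_pos n with rfl | h
      · simp at hkn; omega
      · exact h
    have hjn' : j < n := by omega
    have hndvd : ¬ p ^ j ∣ k := by
      intro hdvd
      have := (padicValNat_dvd_iff_le (by omega : k ≠ 0)).mp hdvd
      omega
    rw [ceil_div_not_dvd hd hndvd]
    have hdig' : k / p ^ j % p ≠ p - 1 := hdig
    have hmod := Nat.div_add_mod k (p ^ j)
    have hr0 : k % p ^ j ≠ 0 := fun hc => hndvd (Nat.dvd_of_mod_eq_zero hc)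
    have hrd : k % p ^ j < p ^ j := Nat.mod_lt k hd
    have hqlt : k / p ^ j % p < p := Nat.mod_lt _ hp.pos
    have hpq1 : ¬ p ∣ (k / p ^ j + 1) := by
      intro hdvd
      have h1 : (k / p ^ j + 1) % p = 0 := Nat.mod_eq_zero_of_dvd hdvd
      rw [Nat.add_mod, Nat.mod_eq_of_lt hp2, Nat.mod_eq_of_lt (by omega)] at h1
      omega
    have hval : padicValNat p (p ^ j * (k / p ^ j + 1)) = j :=
      padic_mul_pow hp j hpq1 (Nat.succ_ne_zero _)
    have hmul : p ^ j * (k / p ^ j + 1) = p ^ j * (k / p ^ j) + p ^ j := by ring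
    have hsplit : p ^ n = p ^ j * p ^ (n - j) := by
      rw [← pow_add]
      congr 1
      omega
    have hqbound : k / p ^ j + 1 < p ^ (n - j) := by
      have hqlt' : k / p ^ j < p ^ (n - j) := by
        rw [Nat.div_lt_iff_lt_mul hd, mul_comm, ← hsplit]
        exact hkn
      by_contra hc
      have hqeq : k / p ^ j = p ^ (n - j) - 1 := by
        generalize hA : k / p ^ j = a at hc hqlt' ⊢
        generalize hB : p ^ (n - j) = b at hc hqlt' ⊢
        omega
      have hnj : 1 ≤ n - j := by omega
      have hpow : p ^ (n - j) = p * p ^ (n - j - 1) := by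
        rw [← pow_succ']
        congr 1
        omega
      have hx : 1 ≤ p ^ (n - j - 1) := Nat.pow_pos (n := _) hp.pos
      apply hdig'
      rw [hqeq, hpow]
      have he : p * p ^ (n - j - 1) - 1 = p * (p ^ (n - j - 1) - 1) + (p - 1) := by
        have h1 : p ≤ p * p ^ (n - j - 1) := Nat.le_mul_of_pos_right p hx
        rw [Nat.mul_sub, Nat.mul_one]
        generalize hy : p * p ^ (n - j - 1) = y at h1 ⊢
        omega
      rw [he, Nat.mul_add_mod, Nat.mod_eq_of_lt (by omega)]
    have hult : p ^ j * (k / p ^ j + 1) < p ^ n := by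
      rw [hsplit]
      exact (Nat.mul_lt_mul_left hd).mpr hqbound
    exact ⟨by omega, hult, by omega, hval⟩

lemma third_mem (hp : p.Prime) {n k u : ℕ} (hk1 : 1 ≤ k) (hkn : k < p ^ n)
    (hu : u < p ^ n) (hku : k ≤ u) (hsmall : u - p ^ padicValNat p u < k) :
    (padicValNat p u = padicValNat p k ∨
      (padicValNat p k < padicValNat p u ∧ padicValNat p u ≤ n - 1 ∧
        dig p k (padicValNat p u) ≠ p - 1)) ∧
    u = p ^ padicValNat p u * ((k + p ^ padicValNat p u - 1) / p ^ padicValNat p u) := by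
  haveI := Fact.mk hp
  have hp2 : 2 ≤ p := hp.two_le
  have hu0 : u ≠ 0 := by omega
  set j := padicValNat p u with hj
  have hd : 0 < p ^ j := Nat.pow_pos (n := j) hp.pos
  have hdvd : p ^ j ∣ u := pow_padicValNat_dvd
  have hdu : p ^ j ≤ u := Nat.le_of_dvd (by omega) hdvd
  have hultk : u < k + p ^ j := by omega
  have hjn : j < n := by
    have h1 : p ^ j < p ^ n := by omega
    exact (Nat.pow_lt_pow_iff_right hp.one_lt).mp h1
  by_cases hkdvd : p ^ j ∣ k
  · -- then u = k
    have huk : u = k := by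
      obtain ⟨a, ha⟩ := hdvd
      obtain ⟨b, hb⟩ := hkdvd
      have hba : b ≤ a := by
        by_contra hc
        push_neg at hc
        have : a + 1 ≤ b := hc
        have h2 : p ^ j * (a + 1) ≤ p ^ j * b := Nat.mul_le_mul_left _ this
        have h3 : p ^ j * (a+1) = p ^ j * a + p ^ j := by ring
        omega
      have h2 : p ^ j * b ≤ p ^ j * a := Nat.mul_le_mul_left _ hba
      have hab : a ≤ b := by
        by_contra hc
        push_neg at hc
        have h3 : p ^ j * (b + 1) ≤ p ^ j * a := Nat.mul_le_mul_left _ hc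
        have h4 : p ^ j * (b+1) = p ^ j * b + p ^ j := by ring
        omega
      rw [ha, hb, le_antisymm hab hba]
    constructor
    · left
      rw [hj, huk]
    · rw [ceil_div_dvd hd hkdvd]
      exact huk
  · have hvj : padicValNat p k < j := by
      by_contra hc
      push_neg at hc
      exact hkdvd (dvd_trans (pow_dvd_pow p hc) pow_padicValNat_dvd)
    have hceil : (k + p ^ j - 1) / p ^ j = k / p ^ j + 1 := ceil_div_not_dvd hd hkdvd
    have hmod := Nat.div_add_mod k (p ^ j)
    have hr0 : k % p ^ j ≠ 0 := fun hc => hkdvd (Nat.dvd_of_mod_eq_zero hc)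
    have hrd : k % p ^ j < p ^ j := Nat.mod_lt k hd
    -- u = p^j * (k/p^j + 1)
    obtain ⟨a, ha⟩ := hdvd
    have hueq : u = p ^ j * (k / p ^ j + 1) := by
      have h1 : p ^ j * (k / p ^ j) < u := by omega
      have h2 : u < p ^ j * (k / p ^ j) + 2 * p ^ j := by omega
      have h3 : k / p ^ j < a := by
        have := Nat.lt_of_mul_lt_mul_left (a := p ^ j) (by omega : p ^ j * (k / p ^ j) < p ^ j * a)
        omega
      have h4 : a < k / p ^ j + 2 := by
        have h5 : p ^ j * a < p ^ j * (k / p ^ j + 2) := by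
          have : p ^ j * (k / p ^ j + 2) = p ^ j * (k / p ^ j) + 2 * p ^ j := by ring
          omega
        exact Nat.lt_of_mul_lt_mul_left h5
      have : a = k / p ^ j + 1 := by omega
      rw [ha, this]
    have hpq1 : ¬ p ∣ (k / p ^ j + 1) := by
      intro hdvd'
      apply pow_succ_padicValNat_not_dvd (p := p) hu0
      obtain ⟨c, hc⟩ := hdvd'
      rw [← hj, hueq, hc, pow_succ]
      exact ⟨c, by ring⟩
    have hdig : dig p k j ≠ p - 1 := by
      show k / p ^ j % p ≠ p - 1
      intro hc
      apply hpq1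
      have h1 : (k / p ^ j + 1) % p = 0 := by
        rw [Nat.add_mod, Nat.mod_eq_of_lt hp2, hc]
        have : p - 1 + 1 = p := by omega
        rw [this, Nat.mod_self]
      exact Nat.dvd_of_mod_eq_zero h1
    exact ⟨Or.inr ⟨hvj, by omega, hdig⟩, by rw [hceil]; exact hueq⟩


open Finset

open Classical in
theorem stmt_13 (p n : ℕ) (hp : p.Prime) (hn : 1 ≤ n) (h : ℕ)
    (hh1 : 2 ≤ h) (hh2 : h ≤ p ^ n)
    (m k : ℕ) (hm : m = h - 1) (hk : k = max m (p ^ n - m))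
    (w : ℕ → ℤ)
    (hw : ∀ s, w s = if k ≤ s then 1 else 0) :
    (((Finset.range (p ^ n)).filter (fun u =>
        ∀ s, s < p ^ n → s ≠ 0 → preceq p s u → s ≠ u →
          w u > w (u - s) + w s)).card : ℤ)
      = n + 2 + alphaCount p n k - gammaCount p n k := by
  classical
  have hp2 : 2 ≤ p := hp.two_le
  have hPn : p ≤ p ^ n := by
    calc p = p ^ 1 := (pow_one p).symm
    _ ≤ p ^ n := Nat.pow_le_pow_right hp.pos hn
  have hk1 : 1 ≤ k := by omega
  have hkn : k < p ^ n := by omega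
  have h2k : p ^ n ≤ 2 * k := by omega
  have hsplit : p ^ n = p * p ^ (n - 1) := by
    rw [← pow_succ']
    congr 1
    omega
  have hmulge : 2 * p ^ (n-1) ≤ p * p ^ (n-1) := Nat.mul_le_mul_right _ hp2
  have hk_half : p ^ (n - 1) ≤ k := by omega
  have hgamle : gammaCount p n k ≤ 1 := by
    unfold gammaCount
    split <;> omega
  have hstrict : gammaCount p n k = 0 → p ^ (n - 1) < k := by
    intro hg
    unfold gammaCount at hg
    split at hg
    · omega
    · next hng =>
      rcases Nat.lt_or_ge 2 p with h3 | h3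
      · -- p ≥ 3
        have h4 : 3 * p ^ (n-1) ≤ p * p ^ (n-1) := Nat.mul_le_mul_right _ h3
        have h5 : 1 ≤ p ^ (n-1) := Nat.pow_pos (n := _) hp.pos
        omega
      · have hp2' : p = 2 := by omega
        have : k ≠ 2 ^ (n-1) := fun hc => hng ⟨hp2', hc⟩
        rw [hp2'] at hk_half ⊢
        omega
  have hgam_eq : gammaCount p n k = 1 → p ^ (n-1) = k := by
    intro hg
    unfold gammaCount at hg
    split at hg
    · next hc => rw [hc.1, hc.2]
    · omega
  have hpow_lt : ∀ i, i < n - gammaCount p n k ↔ (i < n ∧ p ^ i < k) := by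
    intro i
    rcases Nat.eq_zero_or_pos (gammaCount p n k) with hg | hg
    · rw [hg]
      constructor
      · intro hi
        refine ⟨by omega, ?_⟩
        calc p ^ i ≤ p ^ (n-1) := Nat.pow_le_pow_right hp.pos (by omega)
        _ < k := hstrict hg
      · intro hi; omega
    · have hg1 : gammaCount p n k = 1 := by omega
      rw [hg1]
      have hkk := hgam_eq hg1
      constructor
      · intro hi
        refine ⟨by omega, ?_⟩
        rw [← hkk]
        exact Nat.pow_lt_pow_right hp.one_lt (by omega)
      · intro ⟨hi, hik⟩
        by_contra hc
        have : n - 1 ≤ i := by omega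
        have : p ^ (n-1) ≤ p ^ i := Nat.pow_le_pow_right hp.pos this
        omega
  -- abbreviations
  set V := padicValNat p k with hV
  set A := (Finset.Ioc V (n-1)).filter (fun j => dig p k j ≠ p - 1) with hA
  set T := insert V A with hT
  set f : ℕ → ℕ := fun j => p ^ j * ((k + p ^ j - 1) / p ^ j) with hf
  have hTspec : ∀ j ∈ T, j = V ∨ (V < j ∧ j ≤ n - 1 ∧ dig p k j ≠ p - 1) := by
    intro j hj
    rw [hT, mem_insert] at hj
    rcases hj with rfl | hj
    · exact Or.inl rfl
    · rw [hA, mem_filter, mem_Ioc] at hj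
      exact Or.inr ⟨hj.1.1, hj.1.2, hj.2⟩
  have hfspec : ∀ j ∈ T, k ≤ f j ∧ f j < p ^ n ∧ f j < k + p ^ j ∧
      padicValNat p (f j) = j := fun j hj => fj_spec hp hk1 hkn (hTspec j hj)
  -- step 1 : rewrite the filter
  rw [Finset.filter_congr (fun u hu => charP hp n k hk1 w hw (Finset.mem_range.mp hu))]
  -- step 2 : set equality
  have hSeq : (Finset.range (p ^ n)).filter (fun u => u = 0 ∨ (u < k ∧ ∃ i, u = p ^ i) ∨
        (k ≤ u ∧ u - p ^ padicValNat p u < k))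
      = insert 0 (((Finset.range (n - gammaCount p n k)).image (fun i => p ^ i)) ∪
          T.image f) := by
    ext u
    simp only [mem_filter, mem_range, mem_insert, mem_union, mem_image]
    constructor
    · rintro ⟨hu, rfl | ⟨huk, i, rfl⟩ | ⟨hku, hsmall⟩⟩
      · exact Or.inl rfl
      · refine Or.inr (Or.inl ⟨i, ?_, rfl⟩)
        rw [hpow_lt i]
        exact ⟨(Nat.pow_lt_pow_iff_right hp.one_lt).mp hu, huk⟩
      · obtain ⟨hmem, hueq⟩ := third_mem hp hk1 hkn hu hku hsmall
        refine Or.inr (Or.inr ⟨padicValNat p u, ?_, hueq.symm⟩)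
        rw [hT, mem_insert]
        rcases hmem with h1 | ⟨h1, h2, h3⟩
        · exact Or.inl h1
        · right
          rw [hA, mem_filter, mem_Ioc]
          exact ⟨⟨h1, h2⟩, h3⟩
    · rintro (rfl | ⟨i, hi, rfl⟩ | ⟨j, hj, rfl⟩)
      · exact ⟨by omega, Or.inl rfl⟩
      · rw [hpow_lt i] at hi
        refine ⟨lt_of_lt_of_le hi.2 hkn.le, Or.inr (Or.inl ⟨hi.2, i, rfl⟩)⟩
      · obtain ⟨h1, h2, h3, h4⟩ := hfspec j hj
        refine ⟨h2, Or.inr (Or.inr ⟨h1, ?_⟩)⟩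
        rw [h4]
        omega
  rw [hSeq]
  -- step 3 : cardinalities
  have h0notin : (0:ℕ) ∉ ((Finset.range (n - gammaCount p n k)).image (fun i => p ^ i)) ∪
      T.image f := by
    rw [mem_union]
    rintro (hmem | hmem)
    · rw [mem_image] at hmem
      obtain ⟨i, _, hi⟩ := hmem
      exact (Nat.pow_pos (n := i) hp.pos).ne' hi
    · rw [mem_image] at hmem
      obtain ⟨j, hj, hje⟩ := hmem
      have := (hfspec j hj).1
      omega
  have hdisj : Disjoint ((Finset.range (n - gammaCount p n k)).image (fun i => p ^ i))
      (T.image f) := by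
    rw [Finset.disjoint_left]
    intro x hx1 hx2
    rw [mem_image] at hx1 hx2
    obtain ⟨i, hi, hie⟩ := hx1
    obtain ⟨j, hj, hje⟩ := hx2
    rw [mem_range, hpow_lt i] at hi
    have := (hfspec j hj).1
    omega
  rw [Finset.card_insert_of_notMem h0notin, Finset.card_union_of_disjoint hdisj,
    Finset.card_image_of_injective _ (fun a b hab => Nat.pow_right_injective hp2 hab),
    Finset.card_range,
    Finset.card_image_of_injOn (fun a ha b hb hab => by
      have h1 := (hfspec a ha).2.2.2
      have h2 := (hfspec b hb).2.2.2
      rw [← h1, ← h2, hab])]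
  have hVA : V ∉ A := by
    rw [hA, mem_filter, mem_Ioc]
    rintro ⟨⟨hc, _⟩, _⟩
    omega
  rw [hT, Finset.card_insert_of_notMem hVA]
  have hAcard : A.card = alphaCount p n k := rfl
  rw [hAcard]
  have hga := hgamle
  push_cast
  omega
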